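/- arXiv:1508.06446 — 2 statements merged into one kernel-verified Lean document; each statement's English description precedes it below -/
import Mathlib

section
/- If w_1, w_2, ... are i.i.d. random variables with w_i ~ Beta(1, α) for α > 0, and β_i = w_i · ∏_{j<i} (1 - w_j), then almost surely ∑_{i=1}^∞ β_i = 1. -/
open MeasureTheory ProbabilityTheory Filter
open scoped ENNReal Topology

/-- Beta(a,b) measure on ℝ, defined via its density on (0,1). -/
noncomputable def betaMeasure' (a b : ℝ) : Measure ℝ :=
  (volume.restrict (Set.Ioo (0:ℝ) 1)).withDensity
    fun x => ENNReal.ofReal (x ^ (a - 1) * (1 - x) ^ (b - 1) * Real.Gamma (a + b) /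
      (Real.Gamma a * Real.Gamma b))

lemma betaMeasure_one_eq (α : ℝ) (hα : 0 < α) :
    betaMeasure' 1 α = (volume.restrict (Set.Ioo (0:ℝ) 1)).withDensity
      (fun x => ENNReal.ofReal (α * (1 - x) ^ (α - 1))) := by
  unfold betaMeasure'
  congr 1
  funext x
  rw [add_comm, Real.Gamma_add_one (ne_of_gt hα), Real.Gamma_one]
  have h0 : (1:ℝ) - 1 = 0 := by ring
  rw [h0, Real.rpow_zero]
  have hΓ : Real.Gamma α ≠ 0 := Real.Gamma_ne_zero
    (fun m => by have : (0:ℝ) ≤ m := Nat.cast_nonneg m; intro h; rw [h] at hα; linarith)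
  congr 1
  field_simp

lemma beta_one_lintegral (α : ℝ) (hα : 0 < α) :
    ∫⁻ x, ENNReal.ofReal (1 - x) ∂(betaMeasure' 1 α) = ENNReal.ofReal (α / (α + 1)) := by
  rw [betaMeasure_one_eq α hα]
  have hd : Measurable fun x : ℝ => ENNReal.ofReal (α * (1 - x) ^ (α - 1)) := by
    fun_prop
  have hg : Measurable fun x : ℝ => ENNReal.ofReal (1 - x) := by fun_prop
  rw [lintegral_withDensity_eq_lintegral_mul _ hd hg]
  have key : ∫⁻ x in Set.Ioo (0:ℝ) 1, ENNReal.ofReal (α * (1 - x) ^ α)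
      = ENNReal.ofReal (α / (α + 1)) := by
    have h1 : IntervalIntegrable (fun x : ℝ => x ^ α) volume 0 1 :=
      intervalIntegral.intervalIntegrable_rpow' (by linarith)
    have h2 : IntervalIntegrable (fun x : ℝ => (1 - x) ^ α) volume 0 1 := by
      simpa using (h1.comp_sub_left 1).symm
    have h3 : IntervalIntegrable (fun x : ℝ => α * (1 - x) ^ α) volume 0 1 := h2.const_mul α
    have hInt : IntegrableOn (fun x : ℝ => α * (1 - x) ^ α) (Set.Ioo (0:ℝ) 1) volume :=
      (intervalIntegrable_iff_integrableOn_Ioo_of_le (by norm_num)).1 h3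
    have hnn : 0 ≤ᵐ[volume.restrict (Set.Ioo (0:ℝ) 1)] fun x => α * (1 - x) ^ α := by
      refine (ae_restrict_iff' measurableSet_Ioo).2 (ae_of_all _ fun x hx => ?_)
      have : (0:ℝ) ≤ 1 - x := by linarith [hx.2]
      positivity
    rw [← ofReal_integral_eq_lintegral_ofReal hInt hnn]
    congr 1
    rw [← integral_Ioc_eq_integral_Ioo, ← intervalIntegral.integral_of_le (by norm_num : (0:ℝ) ≤ 1)]
    rw [intervalIntegral.integral_const_mul]
    have hc : (∫ x in (0:ℝ)..1, (1 - x) ^ α) = ∫ x in (0:ℝ)..1, x ^ α := by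
      simpa using intervalIntegral.integral_comp_sub_left (a := 0) (b := 1) (fun x : ℝ => x ^ α) 1
    rw [hc, integral_rpow (Or.inl (by linarith))]
    rw [Real.one_rpow, Real.zero_rpow (by linarith)]
    field_simp
    norm_num
  rw [← key]
  refine setLIntegral_congr_fun measurableSet_Ioo (fun x hx => ?_)
  have h1x : (0:ℝ) < 1 - x := by linarith [hx.2]
  show ENNReal.ofReal (α * (1 - x) ^ (α - 1)) * ENNReal.ofReal (1 - x)
      = ENNReal.ofReal (α * (1 - x) ^ α)
  rw [← ENNReal.ofReal_mul (by positivity)]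
  congr 1
  rw [mul_assoc]
  congr 1
  rw [show α = (α - 1) + 1 by ring, Real.rpow_add h1x, Real.rpow_one]
  ring_nf

lemma telescope_prod (v : ℕ → ℝ) (n : ℕ) :
    ∑ i ∈ Finset.range n, v i * ∏ j ∈ Finset.range i, (1 - v j)
      = 1 - ∏ j ∈ Finset.range n, (1 - v j) := by
  induction n with
  | zero => simp
  | succ n ih => rw [Finset.sum_range_succ, Finset.prod_range_succ, ih]; ring

/-- Stick-breaking: if `w i` are i.i.d. Beta(1, α) with α > 0 and
`β i = w i * ∏_{j<i} (1 - w j)`, then almost surely `∑ i, β i = 1`. -/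
theorem stick_breaking_sums_to_one
    {Ω : Type*} [MeasurableSpace Ω] (μ : Measure Ω) [IsProbabilityMeasure μ]
    (α : ℝ) (hα : 0 < α) (w : ℕ → Ω → ℝ)
    (hmeas : ∀ i, Measurable (w i))
    (hindep : iIndepFun w μ)
    (hlaw : ∀ i, Measure.map (w i) μ = betaMeasure' 1 α) :
    ∀ᵐ ω ∂μ, ∑' i : ℕ, (w i ω * ∏ j ∈ Finset.range i, (1 - w j ω)) = 1 := by
  set f : ℕ → Ω → ℝ≥0∞ := fun j ω => ENNReal.ofReal (1 - w j ω) with hf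
  have hfmeas : ∀ j, Measurable (f j) := fun j =>
    ENNReal.measurable_ofReal.comp (measurable_const.sub (hmeas j))
  have hfind : iIndepFun f μ :=
    hindep.comp (fun _ x => ENNReal.ofReal (1 - x))
      (fun _ => ENNReal.measurable_ofReal.comp (measurable_const.sub measurable_id))
  set c : ℝ≥0∞ := ENNReal.ofReal (α / (α + 1)) with hcdef
  have hcf : ∀ j, ∫⁻ ω, f j ω ∂μ = c := by
    intro j
    have h1 : ∫⁻ ω, f j ω ∂μ = ∫⁻ x, ENNReal.ofReal (1 - x) ∂(Measure.map (w j) μ) :=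
      (lintegral_map (ENNReal.measurable_ofReal.comp (measurable_const.sub measurable_id)) (hmeas j)).symm
    rw [h1, hlaw j, beta_one_lintegral α hα]
  have hPmeas : ∀ n, Measurable fun ω => ∏ j ∈ Finset.range n, f j ω :=
    fun n => Finset.measurable_prod _ fun j _ => hfmeas j
  have hprod : ∀ n, ∫⁻ ω, ∏ j ∈ Finset.range n, f j ω ∂μ = c ^ n := by
    intro n
    induction n with
    | zero => simp
    | succ n ih =>
      have hind : IndepFun (∏ j ∈ Finset.range n, f j) (f n) μ :=
        hfind.indepFun_prod_range_succ hfmeas n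
      have heq : (∏ j ∈ Finset.range n, f j) = fun ω => ∏ j ∈ Finset.range n, f j ω :=
        funext fun ω => by simp [Finset.prod_apply]
      have hmul := lintegral_mul_eq_lintegral_mul_lintegral_of_indepFun
        (μ := μ) (f := ∏ j ∈ Finset.range n, f j) (g := f n)
        (heq ▸ hPmeas n) (hfmeas n) hind
      calc ∫⁻ ω, ∏ j ∈ Finset.range (n+1), f j ω ∂μ
          = ∫⁻ ω, ((∏ j ∈ Finset.range n, f j) * f n) ω ∂μ := by
            simp [Finset.prod_range_succ, Finset.prod_apply]
        _ = (∫⁻ ω, (∏ j ∈ Finset.range n, f j) ω ∂μ) * ∫⁻ ω, f n ω ∂μ := hmul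
        _ = c ^ n * c := by
            rw [hcf n, ← ih]; congr 1; simp [Finset.prod_apply]
        _ = c ^ (n+1) := by ring
  have hc1 : c < 1 := by
    rw [hcdef]
    exact ENNReal.ofReal_lt_one.2 ((div_lt_one (by linarith)).2 (by linarith))
  have htendc : Tendsto (fun n => c ^ n) atTop (𝓝 0) :=
    ENNReal.tendsto_pow_atTop_nhds_zero_of_lt_one hc1
  have hliminf0 : ∀ᵐ ω ∂μ, liminf (fun n => ∏ j ∈ Finset.range n, f j ω) atTop = 0 := by
    have hm : Measurable fun ω => liminf (fun n => ∏ j ∈ Finset.range n, f j ω) atTop :=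
      Measurable.liminf hPmeas
    have hz : (fun ω => liminf (fun n => ∏ j ∈ Finset.range n, f j ω) atTop) =ᵐ[μ] 0 := by
      rw [← lintegral_eq_zero_iff hm]
      refine le_antisymm ?_ zero_le
      calc ∫⁻ ω, liminf (fun n => ∏ j ∈ Finset.range n, f j ω) atTop ∂μ
          ≤ liminf (fun n => ∫⁻ ω, ∏ j ∈ Finset.range n, f j ω ∂μ) atTop :=
            lintegral_liminf_le hPmeas
        _ = liminf (fun n => c ^ n) atTop := by simp only [hprod]
        _ = 0 := htendc.liminf_eq
    filter_upwards [hz] with ω h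
    simpa using h
  have hIoo : ∀ᵐ ω ∂μ, ∀ j, w j ω ∈ Set.Ioo (0:ℝ) 1 := by
    rw [ae_all_iff]
    intro j
    have hz : μ (w j ⁻¹' (Set.Ioo (0:ℝ) 1)ᶜ) = 0 := by
      rw [← Measure.map_apply (hmeas j) measurableSet_Ioo.compl, hlaw j]
      unfold betaMeasure'
      rw [withDensity_apply _ measurableSet_Ioo.compl,
        Measure.restrict_restrict measurableSet_Ioo.compl, Set.compl_inter_self]
      simp
    have hset : {ω | ¬ w j ω ∈ Set.Ioo (0:ℝ) 1} = w j ⁻¹' (Set.Ioo (0:ℝ) 1)ᶜ := rfl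
    rw [ae_iff, hset]
    exact hz
  filter_upwards [hliminf0, hIoo] with ω h0 hI
  set R : ℕ → ℝ := fun n => ∏ j ∈ Finset.range n, (1 - w j ω) with hR
  have hfact : ∀ j, 0 < 1 - w j ω ∧ 1 - w j ω < 1 := fun j =>
    ⟨by linarith [(hI j).2], by linarith [(hI j).1]⟩
  have hRpos : ∀ n, 0 < R n := fun n => Finset.prod_pos fun j _ => (hfact j).1
  have hfR : ∀ n, (∏ j ∈ Finset.range n, f j ω) = ENNReal.ofReal (R n) := by
    intro n
    rw [hR]
    simp only [hf]
    rw [ENNReal.ofReal_prod_of_nonneg fun j _ => (hfact j).1.le]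
  have hRanti : Antitone R := antitone_nat_of_succ_le fun n => by
    rw [hR]
    simp only
    rw [Finset.prod_range_succ]
    nlinarith [hRpos n, (hfact n).2, (hfact n).1]
  have hbdd : BddBelow (Set.range R) := ⟨0, by rintro x ⟨n, rfl⟩; exact (hRpos n).le⟩
  set L : ℝ := ⨅ n, R n with hL
  have hRtend : Tendsto R atTop (𝓝 L) := tendsto_atTop_ciInf hRanti hbdd
  have hLnn : 0 ≤ L := le_ciInf fun n => (hRpos n).le
  have hofRtend : Tendsto (fun n => ENNReal.ofReal (R n)) atTop (𝓝 (ENNReal.ofReal L)) :=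
    (ENNReal.continuous_ofReal.tendsto L).comp hRtend
  have hL0 : L = 0 := by
    have h1 : liminf (fun n => ENNReal.ofReal (R n)) atTop = ENNReal.ofReal L :=
      hofRtend.liminf_eq
    have h2 : liminf (fun n => ENNReal.ofReal (R n)) atTop = 0 := by
      rw [← h0]; congr 1; funext n; rw [hfR n]
    rw [h2] at h1
    have := ENNReal.ofReal_eq_zero.1 h1.symm
    linarith
  rw [hL0] at hRtend
  have htel : ∀ n, ∑ i ∈ Finset.range n, w i ω * ∏ j ∈ Finset.range i, (1 - w j ω)
      = 1 - R n := fun n => telescope_prod (fun j => w j ω) n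
  have hβnn : ∀ i, 0 ≤ w i ω * ∏ j ∈ Finset.range i, (1 - w j ω) := fun i =>
    mul_nonneg (hI i).1.le (hRpos i).le
  have hsummable : Summable fun i => w i ω * ∏ j ∈ Finset.range i, (1 - w j ω) := by
    refine summable_of_sum_range_le (c := 1) hβnn fun n => ?_
    rw [htel n]
    linarith [hRpos n]
  have hS : Tendsto (fun n => ∑ i ∈ Finset.range n,
      w i ω * ∏ j ∈ Finset.range i, (1 - w j ω)) atTop (𝓝 1) := by
    simp only [htel]
    simpa using hRtend.const_sub 1
  exact tendsto_nhds_unique hsummable.hasSum.tendsto_sum_nat hS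
end

section
/- Let K_n be the number of tables after n customers in CRP(α). Then K_n / log n → α almost surely as n → ∞. -/
open MeasureTheory ProbabilityTheory Filter Finset Topology

private lemma crp_log_tendsto : Tendsto (fun n : ℕ => Real.log n) atTop atTop :=
  Real.tendsto_log_atTop.comp tendsto_natCast_atTop_atTop

private lemma crp_harmonic_eq (n : ℕ) :
    ((harmonic n : ℚ) : ℝ) = ∑ i ∈ range n, ((i : ℝ) + 1)⁻¹ := by
  rw [harmonic]
  push_cast
  rfl

private lemma crp_sum_p_sub_log (α : ℝ) (hα : 0 < α) :
    ∃ L : ℝ, Tendsto (fun n : ℕ =>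
      (∑ i ∈ range n, α / (α + i)) - α * Real.log n) atTop (𝓝 L) := by
  set c : ℕ → ℝ := fun i => α / (α + (i : ℝ)) - α * ((i : ℝ) + 1)⁻¹ with hc
  have hden : ∀ i : ℕ, (0:ℝ) < α + i := fun i => by positivity
  have hsum2 : Summable (fun i : ℕ => ((i : ℝ) + 1)⁻¹ ^ 2) := by
    have h := Real.summable_one_div_nat_pow.mpr (le_refl 2)
    have h' := (summable_nat_add_iff 1).mpr h
    refine h'.congr fun i => ?_
    push_cast
    rw [one_div, inv_pow]
  have hcb : ∀ i : ℕ, |c i| ≤ (α * |1 - α| / min α 1) * ((i : ℝ) + 1)⁻¹ ^ 2 := by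
    intro i
    have hi1 : (0:ℝ) < (i : ℝ) + 1 := by positivity
    have hceq : c i = α * (1 - α) / ((α + i) * ((i : ℝ) + 1)) := by
      rw [hc]
      field_simp
      try ring
    have hmin : min α 1 * ((i:ℝ) + 1) ≤ α + i := by
      rcases le_total α 1 with h | h
      · rw [min_eq_left h]; nlinarith
      · rw [min_eq_right h]; nlinarith
    have hminpos : (0:ℝ) < min α 1 := lt_min hα one_pos
    rw [hceq, abs_div, abs_mul, abs_of_pos hα, abs_of_pos (by positivity : (0:ℝ) < (α + i) * ((i:ℝ)+1))]
    rw [div_le_iff₀ (by positivity)]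
    have h1 : (α * |1 - α| / min α 1) * ((i : ℝ) + 1)⁻¹ ^ 2 * ((α + ↑i) * (↑i + 1))
        = (α * |1 - α|) * (((α + i) * ((i:ℝ)+1)) / (min α 1 * ((i:ℝ)+1)^2)) := by
      field_simp
      try ring
    rw [h1]
    have h2 : (1:ℝ) ≤ ((α + i) * ((i:ℝ)+1)) / (min α 1 * ((i:ℝ)+1)^2) := by
      rw [le_div_iff₀ (by positivity), one_mul, pow_two, ← mul_assoc]
      exact mul_le_mul_of_nonneg_right hmin hi1.le
    nlinarith [abs_nonneg (1 - α), mul_nonneg hα.le (abs_nonneg (1 - α))]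
  have hcsum : Summable c := by
    refine Summable.of_abs (Summable.of_nonneg_of_le (fun i => abs_nonneg _) hcb ?_)
    exact hsum2.mul_left _
  have hcten : Tendsto (fun n => ∑ i ∈ range n, c i) atTop (𝓝 (∑' i, c i)) :=
    hcsum.hasSum.tendsto_sum_nat
  have hH := Real.tendsto_harmonic_sub_log
  refine ⟨(∑' i, c i) + α * Real.eulerMascheroniConstant,
    (hcten.add ((hH.const_mul α))).congr fun n => ?_⟩
  rw [crp_harmonic_eq, mul_sub, ← add_sub_assoc, Finset.mul_sum, ← Finset.sum_add_distrib]
  congr 1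
  exact Finset.sum_congr rfl fun i _ => by simp only [hc]; ring

private lemma crp_sum_p_div_log (α : ℝ) (hα : 0 < α) :
    Tendsto (fun n : ℕ => (∑ i ∈ range n, α / (α + i)) / Real.log n) atTop (𝓝 α) := by
  obtain ⟨L, hL⟩ := crp_sum_p_sub_log α hα
  have h0 : Tendsto (fun n : ℕ =>
      ((∑ i ∈ range n, α / (α + i)) - α * Real.log n) / Real.log n) atTop (𝓝 0) :=
    hL.div_atTop crp_log_tendsto
  have := h0.add (tendsto_const_nhds (x := α))
  rw [zero_add] at this
  refine this.congr' ?_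
  filter_upwards [crp_log_tendsto.eventually_gt_atTop 0] with n hn
  field_simp
  ring

private lemma crp_sum_p_le (α : ℝ) (hα : 0 < α) (n : ℕ) :
    ∑ i ∈ range n, α / (α + i) ≤ 1 + α * (1 + Real.log n) := by
  have hlog : (0:ℝ) ≤ Real.log n := Real.log_natCast_nonneg n
  cases n with
  | zero => simp; positivity
  | succ m =>
    rw [Finset.sum_range_succ']
    have h0 : α / (α + (0:ℕ)) = 1 := by simp [hα.ne']
    rw [h0]
    have h1 : ∑ i ∈ range m, α / (α + ((i:ℕ)+1 : ℕ)) ≤ α * ((harmonic m : ℚ) : ℝ) := by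
      rw [crp_harmonic_eq, Finset.mul_sum]
      refine Finset.sum_le_sum fun i _ => ?_
      push_cast
      have hinv : (0:ℝ) ≤ ((i:ℝ)+1)⁻¹ := by positivity
      have key : (((i:ℝ)+1))⁻¹ * ((i:ℝ)+1) = 1 := inv_mul_cancel₀ (by positivity)
      rw [div_le_iff₀ (by positivity)]
      nlinarith [hα.le, mul_nonneg (mul_nonneg hα.le hinv) hα.le]
    have h2 : ((harmonic m : ℚ) : ℝ) ≤ 1 + Real.log m := harmonic_le_one_add_log m
    have h3 : Real.log (m : ℝ) ≤ Real.log ((m:ℝ)+1) := by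
      rcases Nat.eq_zero_or_pos m with h | h
      · simp [h]
      · exact Real.log_le_log (by positivity) (by linarith)
    push_cast at h1 ⊢
    nlinarith [hα.le, mul_le_mul_of_nonneg_left h2 hα.le, mul_le_mul_of_nonneg_left h3 hα.le]

/-- The subsequence `n_k = ⌈exp(k²)⌉`. -/
noncomputable def crpSeq (k : ℕ) : ℕ := ⌈Real.exp ((k : ℝ)^2)⌉₊

private lemma crpSeq_one_le (k : ℕ) : 1 ≤ crpSeq k :=
  Nat.one_le_ceil_iff.mpr (Real.exp_pos _)

private lemma crpSeq_le_real (k : ℕ) : Real.exp ((k:ℝ)^2) ≤ (crpSeq k : ℝ) := Nat.le_ceil _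

private lemma le_crpSeq (k : ℕ) : k ≤ crpSeq k := by
  have h1 : ((k:ℝ)^2) + 1 ≤ Real.exp ((k:ℝ)^2) := by
    have := Real.add_one_le_exp ((k:ℝ)^2); linarith
  have h2 : (k : ℝ) ≤ (crpSeq k : ℝ) := by
    have := crpSeq_le_real k
    nlinarith [sq_nonneg ((k:ℝ) - 1)]
  exact_mod_cast h2

private lemma log_crpSeq_ge (k : ℕ) : (k:ℝ)^2 ≤ Real.log (crpSeq k) :=
  (Real.le_log_iff_exp_le (by exact_mod_cast crpSeq_one_le k)).mpr (crpSeq_le_real k)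

private lemma log_crpSeq_le (k : ℕ) : Real.log (crpSeq k) ≤ (k:ℝ)^2 + 1 := by
  refine (Real.log_le_iff_le_exp (by exact_mod_cast crpSeq_one_le k)).mpr ?_
  have h1 : (crpSeq k : ℝ) < Real.exp ((k:ℝ)^2) + 1 := Nat.ceil_lt_add_one (Real.exp_pos _).le
  have h2 : (1:ℝ) ≤ Real.exp ((k:ℝ)^2) := Real.one_le_exp (by positivity)
  have h3 : (2:ℝ) ≤ Real.exp 1 := by
    have := Real.add_one_le_exp (1:ℝ); linarith
  have h4 : Real.exp ((k:ℝ)^2 + 1) = Real.exp ((k:ℝ)^2) * Real.exp 1 := Real.exp_add _ _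
  nlinarith

private lemma crpSeq_tendsto : Tendsto crpSeq atTop atTop :=
  tendsto_atTop_mono le_crpSeq tendsto_id

/-- The ratio `log n_{k+1} / log n_k` tends to 1. -/
private lemma crp_ratio_tendsto :
    Tendsto (fun k : ℕ => Real.log (crpSeq (k+1)) / Real.log (crpSeq k)) atTop (𝓝 1) := by
  have hub : Tendsto (fun k : ℕ => 1 + 2*(1/(k:ℝ)) + 3*((1/(k:ℝ))*(1/(k:ℝ)))) atTop (𝓝 1) := by
    have h := tendsto_one_div_atTop_nhds_zero_nat (𝕜 := ℝ)
    have := ((tendsto_const_nhds (x := (1:ℝ))).add (h.const_mul 2)).add ((h.mul h).const_mul 3)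
    simpa using this
  refine tendsto_of_tendsto_of_tendsto_of_le_of_le' tendsto_const_nhds hub ?_ ?_
  · filter_upwards [eventually_ge_atTop 1] with k hk
    have hk1 : (1:ℝ) ≤ (k:ℝ) := by exact_mod_cast hk
    have h1 : (k:ℝ)^2 ≤ Real.log (crpSeq k) := log_crpSeq_ge k
    have h2 : Real.log (crpSeq k) ≤ Real.log (crpSeq (k+1)) := by
      refine Real.log_le_log (lt_of_lt_of_le one_pos (by exact_mod_cast crpSeq_one_le k)) ?_
      have : crpSeq k ≤ crpSeq (k+1) := by
        have ha := log_crpSeq_le k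
        have hb := log_crpSeq_ge (k+1)
        by_contra h
        push_neg at h
        have : Real.log (crpSeq (k+1)) ≤ Real.log (crpSeq k) :=
          Real.log_le_log (by exact_mod_cast crpSeq_one_le (k+1)) (by exact_mod_cast h.le)
        push_cast at hb
        nlinarith
      exact_mod_cast this
    rw [le_div_iff₀ (by nlinarith : (0:ℝ) < Real.log (crpSeq k))]
    nlinarith
  · filter_upwards [eventually_ge_atTop 1] with k hk
    have hk1 : (1:ℝ) ≤ (k:ℝ) := by exact_mod_cast hk
    have h1 : (k:ℝ)^2 ≤ Real.log (crpSeq k) := log_crpSeq_ge k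
    have h2 : Real.log (crpSeq (k+1)) ≤ ((k:ℝ)+1)^2 + 1 := by
      have := log_crpSeq_le (k+1); push_cast at this ⊢; linarith
    rw [div_le_iff₀ (by nlinarith : (0:ℝ) < Real.log (crpSeq k))]
    have hkpos : (0:ℝ) < (k:ℝ) := by linarith
    have hexp : (1 + 2*(1/(k:ℝ)) + 3*((1/(k:ℝ))*(1/(k:ℝ)))) * (k:ℝ)^2
        = (k:ℝ)^2 + 2*(k:ℝ) + 3 := by field_simp
    nlinarith [mul_le_mul_of_nonneg_left h1
      (by positivity : (0:ℝ) ≤ 2*(1/(k:ℝ)) + 3*((1/(k:ℝ))*(1/(k:ℝ))))]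

set_option maxHeartbeats 2000000 in
/-- Strong law for the number of tables in CRP(α): with `B i` independent
Bernoulli indicators, `P(B i = 1) = α/(α + i)` (customer i+1 opens a new
table), and `K_n = ∑_{i<n} B i`, we have `K_n / log n → α` almost surely. -/
theorem crp_tables_log_strong_law
    {Ω : Type*} [MeasurableSpace Ω] (μ : Measure Ω) [IsProbabilityMeasure μ]
    (α : ℝ) (hα : 0 < α) (B : ℕ → Ω → ℕ)
    (hmeas : ∀ i, Measurable (B i))
    (hindep : iIndepFun B μ)
    (h01 : ∀ i ω, B i ω = 0 ∨ B i ω = 1)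
    (hp : ∀ i : ℕ, μ {ω | B i ω = 1} = ENNReal.ofReal (α / (α + i))) :
    ∀ᵐ ω ∂μ, Tendsto
      (fun n : ℕ => (∑ i ∈ Finset.range n, (B i ω : ℝ)) / Real.log n)
      atTop (nhds α) := by
  classical
  set p : ℕ → ℝ := fun i => α / (α + i) with hpdef
  set X : ℕ → Ω → ℝ := fun i ω => (B i ω : ℝ) with hXdef
  set S : ℕ → Ω → ℝ := fun n => ∑ i ∈ range n, X i with hSdef
  set m : ℕ → ℝ := fun n => ∑ i ∈ range n, p i with hmdef
  have hSapp : ∀ n ω, S n ω = ∑ i ∈ range n, X i ω := by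
    intro n ω; rw [hSdef]; simp [Finset.sum_apply]
  have hp_nonneg : ∀ i, 0 ≤ p i := fun i => by
    have : (0:ℝ) < α + i := by positivity
    positivity
  have hXmeas : ∀ i, Measurable (X i) := fun i => measurable_from_top.comp (hmeas i)
  have hX01 : ∀ i ω, X i ω ∈ Set.Icc (0:ℝ) 1 := by
    intro i ω
    rcases h01 i ω with h | h <;> simp [hXdef, h]
  have hXmem : ∀ i, MemLp (X i) 2 μ := fun i =>
    memLp_of_bounded (ae_of_all _ (hX01 i)) (hXmeas i).aestronglyMeasurable 2
  have hXint : ∀ i, Integrable (X i) μ := fun i => (hXmem i).integrable one_le_two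
  have hEX : ∀ i, μ[X i] = p i := by
    intro i
    have hA : MeasurableSet {ω | B i ω = 1} := (hmeas i) (measurableSet_singleton 1)
    have hXind : X i = Set.indicator {ω | B i ω = 1} (fun _ => (1:ℝ)) := by
      funext ω
      rcases h01 i ω with h | h <;>
        simp [hXdef, h, Set.indicator_apply, Set.mem_setOf_eq]
    rw [hXind, integral_indicator_const (1:ℝ) hA, measureReal_def, hp i,
      ENNReal.toReal_ofReal (hp_nonneg i), smul_eq_mul, mul_one]
  have hVarX : ∀ i, variance (X i) μ ≤ p i := by
    intro i
    rw [variance_eq_sub (hXmem i)]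
    have hsq : X i ^ 2 = X i := by
      funext ω
      rcases h01 i ω with h | h <;> simp [hXdef, h]
    rw [hsq, hEX i]
    nlinarith [sq_nonneg (μ[X i]), hEX i, sq_nonneg (p i)]
  have hSmem : ∀ n, MemLp (S n) 2 μ := fun n =>
    memLp_finset_sum' _ (fun i _ => hXmem i)
  have hES : ∀ n, μ[S n] = m n := by
    intro n
    rw [hSdef, hmdef]
    have : ∫ ω, (∑ i ∈ range n, X i) ω ∂μ = ∫ ω, ∑ i ∈ range n, X i ω ∂μ := by
      congr 1; funext ω; simp [Finset.sum_apply]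
    rw [this, integral_finset_sum _ (fun i _ => hXint i)]
    exact Finset.sum_congr rfl fun i _ => hEX i
  have hVarS : ∀ n, variance (S n) μ ≤ m n := by
    intro n
    rw [hSdef, hmdef]
    rw [ProbabilityTheory.IndepFun.variance_sum (fun i _ => hXmem i) ?_]
    · exact Finset.sum_le_sum fun i _ => hVarX i
    · intro i _ j _ hij
      exact (hindep.comp (fun _ (n:ℕ) => (n:ℝ)) (fun _ => measurable_from_top)).indepFun hij
  -- upper bound on m along subsequence
  have hmub : ∀ k : ℕ, 1 ≤ k → m (crpSeq k) ≤ (1 + 3*α) * (k:ℝ)^2 := by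
    intro k hk
    have hk1 : (1:ℝ) ≤ (k:ℝ) := by exact_mod_cast hk
    have h1 : m (crpSeq k) ≤ 1 + α * (1 + Real.log (crpSeq k)) := crp_sum_p_le α hα _
    have h2 := log_crpSeq_le k
    have hksq : (1:ℝ) ≤ (k:ℝ)^2 := by nlinarith
    nlinarith [mul_le_mul_of_nonneg_left h2 hα.le, mul_le_mul_of_nonneg_left hksq hα.le]
  -- Chebyshev events
  set Ev : ℕ → ℕ → Set Ω := fun j k =>
    {ω | (1/((j:ℝ)+1)) * (k:ℝ)^2 ≤ |S (crpSeq k) ω - m (crpSeq k)|} with hEvdef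
  have hcheb : ∀ j k : ℕ,
      μ (Ev j k) ≤ ENNReal.ofReal ((4 * ((1+3*α) * ((j:ℝ)+1)^2)) * (((k:ℝ)+1)⁻¹^2)) := by
    intro j k
    have hCj1 : (1:ℝ) ≤ (1+3*α) * ((j:ℝ)+1)^2 := by nlinarith [Nat.cast_nonneg (α := ℝ) j]
    rcases Nat.eq_zero_or_pos k with hk | hk
    · subst hk
      refine le_trans prob_le_one ?_
      rw [← ENNReal.ofReal_one]
      apply ENNReal.ofReal_le_ofReal
      norm_num
      nlinarith
    · have hk1 : (1:ℝ) ≤ (k:ℝ) := by exact_mod_cast hk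
      have hc : (0:ℝ) < (1/((j:ℝ)+1)) * (k:ℝ)^2 := by positivity
      have hset : Ev j k = {ω | (1/((j:ℝ)+1)) * (k:ℝ)^2 ≤ |S (crpSeq k) ω - μ[S (crpSeq k)]|} := by
        rw [hEvdef]; simp only [hES]
      rw [hset]
      refine le_trans (meas_ge_le_variance_div_sq (hSmem _) hc) (ENNReal.ofReal_le_ofReal ?_)
      have hV : variance (S (crpSeq k)) μ ≤ (1+3*α) * (k:ℝ)^2 :=
        le_trans (hVarS _) (hmub k hk)
      have hVnn : 0 ≤ variance (S (crpSeq k)) μ := variance_nonneg _ _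
      have hc2 : ((1/((j:ℝ)+1)) * (k:ℝ)^2)^2 = (k:ℝ)^4 / ((j:ℝ)+1)^2 := by
        field_simp
      rw [div_le_iff₀ (by positivity), hc2]
      have hrhs : 4 * ((1+3*α) * ((j:ℝ)+1)^2) * ((k:ℝ)+1)⁻¹^2 * ((k:ℝ)^4 / ((j:ℝ)+1)^2)
          = 4 * (1+3*α) * ((k:ℝ)^2/((k:ℝ)+1)^2) * (k:ℝ)^2 := by
        field_simp
      rw [hrhs]
      have h4 : (1:ℝ) ≤ 4 * ((k:ℝ)^2/((k:ℝ)+1)^2) := by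
        rw [show (4:ℝ) * ((k:ℝ)^2/((k:ℝ)+1)^2) = (4*(k:ℝ)^2)/((k:ℝ)+1)^2 by ring,
          le_div_iff₀ (by positivity)]
        nlinarith
      nlinarith [mul_le_mul_of_nonneg_left h4 (mul_nonneg (by nlinarith : (0:ℝ) ≤ 1+3*α)
        (by positivity : (0:ℝ) ≤ (k:ℝ)^2))]
  -- Borel–Cantelli
  have hfin : ∀ j : ℕ, (∑' k, μ (Ev j k)) ≠ ⊤ := by
    intro j
    have hsum : Summable (fun k : ℕ => (4 * ((1+3*α) * ((j:ℝ)+1)^2)) * (((k:ℝ)+1)⁻¹^2)) := by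
      apply Summable.mul_left
      have h := Real.summable_one_div_nat_pow.mpr (le_refl 2)
      have h' := (summable_nat_add_iff 1).mpr h
      refine h'.congr fun i => ?_
      push_cast
      rw [one_div, inv_pow]
    have hnn : ∀ k : ℕ, (0:ℝ) ≤ (4 * ((1+3*α) * ((j:ℝ)+1)^2)) * (((k:ℝ)+1)⁻¹^2) := by
      intro k
      have : (0:ℝ) ≤ 1 + 3*α := by nlinarith
      positivity
    refine ne_of_lt (lt_of_le_of_lt (le_trans (ENNReal.tsum_le_tsum (hcheb j)) ?_)
      (ENNReal.ofReal_lt_top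
        (r := ∑' k : ℕ, (4 * ((1+3*α) * ((j:ℝ)+1)^2)) * (((k:ℝ)+1)⁻¹^2))))
    rw [ENNReal.ofReal_tsum_of_nonneg hnn hsum]
  have hBC : ∀ᵐ ω ∂μ, ∀ j : ℕ, ∀ᶠ k in atTop, ω ∉ Ev j k :=
    (ae_all_iff).2 fun j => ae_eventually_notMem (hfin j)
  filter_upwards [hBC] with ω hω
  -- convergence along the subsequence
  have hS_nonneg : ∀ n, 0 ≤ S n ω := by
    intro n
    rw [hSapp]
    exact Finset.sum_nonneg fun i _ => (hX01 i ω).1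
  have hmono : ∀ {a b : ℕ}, a ≤ b → S a ω ≤ S b ω := by
    intro a b hab
    rw [hSapp, hSapp]
    exact Finset.sum_le_sum_of_subset_of_nonneg (Finset.range_subset_range.mpr hab)
      (fun i _ _ => (hX01 i ω).1)
  have hm_log : Tendsto (fun n : ℕ => m n / Real.log n) atTop (𝓝 α) :=
    crp_sum_p_div_log α hα
  have hsub : Tendsto (fun k => S (crpSeq k) ω / Real.log (crpSeq k)) atTop (𝓝 α) := by
    have hmsub : Tendsto (fun k => m (crpSeq k) / Real.log (crpSeq k)) atTop (𝓝 α) :=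
      hm_log.comp crpSeq_tendsto
    have hdsub : Tendsto
        (fun k => (S (crpSeq k) ω - m (crpSeq k)) / Real.log (crpSeq k)) atTop (𝓝 0) := by
      rw [NormedAddCommGroup.tendsto_nhds_zero]
      intro ε hε
      obtain ⟨j, hj⟩ := exists_nat_one_div_lt hε
      filter_upwards [hω j, eventually_ge_atTop 1] with k hk hk1
      have hk1' : (1:ℝ) ≤ (k:ℝ) := by exact_mod_cast hk1
      rw [hEvdef] at hk
      simp only [Set.mem_setOf_eq, not_le] at hk
      have hlogpos : (0:ℝ) < Real.log (crpSeq k) := lt_of_lt_of_le (by nlinarith) (log_crpSeq_ge k)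
      have hklog : (k:ℝ)^2 ≤ Real.log (crpSeq k) := log_crpSeq_ge k
      rw [Real.norm_eq_abs, abs_div, abs_of_pos hlogpos]
      calc |S (crpSeq k) ω - m (crpSeq k)| / Real.log (crpSeq k)
          ≤ |S (crpSeq k) ω - m (crpSeq k)| / (k:ℝ)^2 :=
            div_le_div_of_nonneg_left (abs_nonneg _) (by nlinarith) hklog
        _ < 1/((j:ℝ)+1) := by
            rw [div_lt_iff₀ (by nlinarith)]
            linarith [hk]
        _ < ε := hj
    have := hdsub.add hmsub
    rw [zero_add] at this
    refine this.congr' ?_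
    filter_upwards [eventually_ge_atTop 1] with k hk
    rw [← add_div, sub_add_cancel]
  -- upper and lower comparison sequences
  set u : ℕ → ℝ := fun k => S (crpSeq (k+1)) ω / Real.log (crpSeq k) with hudef
  set l : ℕ → ℝ := fun k => S (crpSeq k) ω / Real.log (crpSeq (k+1)) with hldef
  have hlogpos : ∀ k : ℕ, 1 ≤ k → (0:ℝ) < Real.log (crpSeq k) := by
    intro k hk
    have hk1' : (1:ℝ) ≤ (k:ℝ) := by exact_mod_cast hk
    exact lt_of_lt_of_le (by nlinarith) (log_crpSeq_ge k)
  have hu_t : Tendsto u atTop (𝓝 α) := by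
    have h1 : Tendsto (fun k => S (crpSeq (k+1)) ω / Real.log (crpSeq (k+1))) atTop (𝓝 α) :=
      hsub.comp (tendsto_add_atTop_nat 1)
    have := h1.mul crp_ratio_tendsto
    rw [mul_one] at this
    refine this.congr' ?_
    filter_upwards [eventually_ge_atTop 1] with k hk
    have h2 : (0:ℝ) < Real.log (crpSeq k) := hlogpos k hk
    have h3 : (0:ℝ) < Real.log (crpSeq (k+1)) := hlogpos (k+1) (by omega)
    rw [hudef]
    exact div_mul_div_cancel₀ (ne_of_gt h3)
  have hl_t : Tendsto l atTop (𝓝 α) := by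
    have := hsub.div crp_ratio_tendsto one_ne_zero
    rw [div_one] at this
    refine this.congr' ?_
    filter_upwards [eventually_ge_atTop 1] with k hk
    have h2 : (0:ℝ) < Real.log (crpSeq k) := hlogpos k hk
    have h3 : (0:ℝ) < Real.log (crpSeq (k+1)) := hlogpos (k+1) (by omega)
    rw [hldef]
    exact div_div_div_cancel_right₀ (ne_of_gt h2) _ _
  -- squeeze on the full sequence
  rw [Metric.tendsto_atTop]
  intro ε hε
  obtain ⟨K₁, hK₁⟩ := Metric.tendsto_atTop.mp hu_t ε hε
  obtain ⟨K₂, hK₂⟩ := Metric.tendsto_atTop.mp hl_t ε hε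
  set K₀ := max (max K₁ K₂) 1 with hK₀def
  refine ⟨crpSeq K₀, fun n hn => ?_⟩
  set k := Nat.findGreatest (fun j => crpSeq j ≤ n) n with hkdef
  have hK₀n : K₀ ≤ n := le_trans (le_crpSeq K₀) hn
  have hkK₀ : K₀ ≤ k := Nat.le_findGreatest (P := fun j => crpSeq j ≤ n) hK₀n hn
  have hk1 : 1 ≤ k := le_trans (le_max_right _ 1) hkK₀
  have hkn : crpSeq k ≤ n := Nat.findGreatest_spec (P := fun j => crpSeq j ≤ n) hK₀n hn
  have hnlt : n < crpSeq (k+1) := by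
    by_contra h
    push_neg at h
    have h1 : k + 1 ≤ n := le_trans (le_crpSeq (k+1)) h
    have h2 : k + 1 ≤ k := Nat.le_findGreatest (P := fun j => crpSeq j ≤ n) h1 h
    omega
  -- real inequalities
  have hLk : (0:ℝ) < Real.log (crpSeq k) := hlogpos k hk1
  have hLn : Real.log (crpSeq k) ≤ Real.log n :=
    Real.log_le_log (by exact_mod_cast crpSeq_one_le k) (by exact_mod_cast hkn)
  have hLn1 : Real.log n ≤ Real.log (crpSeq (k+1)) := by
    have hn1 : (1:ℝ) ≤ (n:ℝ) := by
      have := le_trans (crpSeq_one_le K₀) hn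
      exact_mod_cast this
    exact Real.log_le_log (by linarith) (by exact_mod_cast hnlt.le)
  have hupper : S n ω / Real.log n ≤ u k := by
    rw [hudef]
    exact div_le_div₀ (hS_nonneg _) (hmono hnlt.le) hLk hLn
  have hlower : l k ≤ S n ω / Real.log n := by
    rw [hldef]
    exact div_le_div₀ (hS_nonneg _) (hmono hkn) (by linarith) hLn1
  have hu' := hK₁ k (le_trans (le_trans (le_max_left _ _) (le_max_left _ 1)) hkK₀)
  have hl' := hK₂ k (le_trans (le_trans (le_max_right _ _) (le_max_left _ 1)) hkK₀)
  rw [Real.dist_eq, abs_sub_lt_iff] at hu' hl' ⊢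
  have heq : (fun n : ℕ => (∑ i ∈ Finset.range n, (B i ω : ℝ)) / Real.log n) n
      = S n ω / Real.log n := by rw [hSapp]
  refine ⟨?_, ?_⟩
  · calc (∑ i ∈ Finset.range n, (B i ω : ℝ)) / Real.log n - α
        = S n ω / Real.log n - α := by rw [hSapp]
      _ ≤ u k - α := by linarith
      _ < ε := hu'.1
  · calc α - (∑ i ∈ Finset.range n, (B i ω : ℝ)) / Real.log n
        = α - S n ω / Real.log n := by rw [hSapp]
      _ ≤ α - l k := by linarith
      _ < ε := hl'.2
end
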